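/- Let M be a finite nonempty set with |M| = m, φ : M → ℝ with φ_i ≥ 0 for all i, and ψ > 0. Let h > 0 satisfy (1/m)·∑_{i∈M} min(φ_i, h) + ψ = h. Let θ : ℝ → ℝ be nondecreasing and convex on [0,∞) with θ(0) = 0, and let α ≥ 1 satisfy: for all t ∈ (0,1), d ≥ 0, and r ≥ d/(1−t), t·θ(r + d) + (1−t)·θ(d) ≤ α·( t·θ(r) + (1−t)·θ(d/(1−t)) ). Then ∑_{i∈M} θ(φ_i + ψ) ≤ α · ∑_{i∈M} θ( max(φ_i, h) ). -/

import Mathlib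

/-- core inequality for EF1 scheduling with objective `∑_i θ(load_i)`:
if `φ_i ≥ 0`, `ψ > 0`, `h > 0` satisfies `(1/m)·∑_i min(φ_i, h) + ψ = h`, `θ` is
nondecreasing and convex on `[0,∞)` with `θ(0) = 0`, and `α ≥ 1` satisfies the structural
inequality, then `∑_i θ(φ_i + ψ) ≤ α · ∑_i θ(max(φ_i, h))`. -/
theorem stmt15 {M : Type*} [Fintype M] [Nonempty M]
    (φ : M → ℝ) (hφ : ∀ i, 0 ≤ φ i)
    (ψ : ℝ) (hψ : 0 < ψ)
    (h : ℝ) (hh : 0 < h)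
    (hlevel : (1 / (Fintype.card M : ℝ)) * (∑ i, min (φ i) h) + ψ = h)
    (θ : ℝ → ℝ)
    (hmono : MonotoneOn θ (Set.Ici 0)) (hconv : ConvexOn ℝ (Set.Ici 0) θ) (hθ0 : θ 0 = 0)
    (α : ℝ) (hα : 1 ≤ α)
    (hαineq : ∀ t ∈ Set.Ioo (0 : ℝ) 1, ∀ d : ℝ, 0 ≤ d → ∀ r : ℝ, d / (1 - t) ≤ r →
      t * θ (r + d) + (1 - t) * θ d ≤ α * (t * θ r + (1 - t) * θ (d / (1 - t)))) :
    ∑ i, θ (φ i + ψ) ≤ α * ∑ i, θ (max (φ i) h) := by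
  classical
  set m : ℝ := (Fintype.card M : ℝ) with hm
  have hm0 : (0:ℝ) < m := by
    have hc : 0 < Fintype.card M := Fintype.card_pos
    rw [hm]
    exact_mod_cast hc
  have hsum_min : ∑ i, min (φ i) h = m * (h - ψ) := by
    have h2 := hlevel
    field_simp [hm0.ne'] at h2
    linarith
  have hθψ0 : 0 ≤ θ ψ := by
    have := hmono (Set.mem_Ici.2 le_rfl) (Set.mem_Ici.2 hψ.le) hψ.le
    linarith [hθ0]
  have hθh0 : 0 ≤ θ h := by
    have := hmono (Set.mem_Ici.2 le_rfl) (Set.mem_Ici.2 hh.le) hh.le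
    linarith [hθ0]
  rcases le_or_gt h ψ with hcase | hcase
  · -- degenerate case: h = ψ and all φ i = 0
    have hnn : ∀ i ∈ Finset.univ, (0:ℝ) ≤ min (φ i) h :=
      fun i _ => le_min (hφ i) hh.le
    have hsle : ∑ i, min (φ i) h = 0 := by
      have hle0 : ∑ i, min (φ i) h ≤ 0 := by
        rw [hsum_min]; nlinarith
      have hge0 : 0 ≤ ∑ i, min (φ i) h := Finset.sum_nonneg hnn
      linarith
    have hmin0 : ∀ i, min (φ i) h = 0 :=
      fun i => (Finset.sum_eq_zero_iff_of_nonneg hnn).1 hsle i (Finset.mem_univ i)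
    have hφ0 : ∀ i, φ i = 0 := by
      intro i
      rcases min_cases (φ i) h with ⟨e, _⟩ | ⟨e, _⟩
      · linarith [hmin0 i, hφ i]
      · linarith [hmin0 i, hh]
    have hhψ : h = ψ := by
      rw [hsle] at hsum_min
      nlinarith
    have hL : ∑ i, θ (φ i + ψ) = m * θ ψ := by
      simp only [hφ0, zero_add]
      rw [Finset.sum_const, Finset.card_univ, nsmul_eq_mul, hm]
    have hR : ∑ i, θ (max (φ i) h) = m * θ ψ := by
      simp only [hφ0, hhψ, max_eq_right hψ.le]
      rw [Finset.sum_const, Finset.card_univ, nsmul_eq_mul, hm]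
    rw [hL, hR]
    nlinarith [mul_nonneg (mul_nonneg (sub_nonneg.2 hα) hm0.le) hθψ0]
  · -- main case: ψ < h
    have hhψ : 0 < h - ψ := by linarith
    have hθψh : θ ψ ≤ θ h := hmono (Set.mem_Ici.2 hψ.le) (Set.mem_Ici.2 hh.le) hcase.le
    have hD0 : 0 ≤ α * θ h - θ ψ := by nlinarith
    set t : ℝ := (h - ψ) / h with ht
    have htIoo : t ∈ Set.Ioo (0:ℝ) 1 :=
      ⟨div_pos hhψ hh, by rw [ht, div_lt_one hh]; linarith⟩
    have h1t : 1 - t = ψ / h := by rw [ht]; field_simp; ring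
    have hψ1t : ψ / (1 - t) = h := by
      rw [h1t]
      field_simp
    have key : ∀ r, h ≤ r →
        (h - ψ) * θ (r + ψ) ≤ (h - ψ) * (α * θ r) + ψ * (α * θ h - θ ψ) := by
      intro r hr
      have h2 := hαineq t htIoo ψ hψ.le r (by rw [hψ1t]; exact hr)
      rw [hψ1t, h1t, ht] at h2
      have h3 := mul_le_mul_of_nonneg_left h2 hh.le
      have e1 : h * ((h - ψ) / h * θ (r + ψ) + ψ / h * θ ψ)
          = (h - ψ) * θ (r + ψ) + ψ * θ ψ := by field_simp
      have e2 : h * (α * ((h - ψ) / h * θ r + ψ / h * θ h))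
          = α * ((h - ψ) * θ r + ψ * θ h) := by field_simp
      rw [e1, e2] at h3
      linarith [h3]
    have perI : ∀ i, h * (h - ψ) * θ (φ i + ψ)
        ≤ h * (h - ψ) * (α * θ (max (φ i) h))
          + min (φ i) h * ψ * (α * θ h - θ ψ)
          - (h - min (φ i) h) * (h - ψ) * (α * θ h - θ ψ) := by
      intro i
      rcases le_total h (φ i) with hi | hi
      · rw [max_eq_left hi, min_eq_right hi]
        have hk := key (φ i) hi
        have := mul_le_mul_of_nonneg_left hk hh.le
        linarith [this]
      · rw [max_eq_right hi, min_eq_left hi]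
        set l : ℝ := φ i / h with hl
        have hl0 : 0 ≤ l := div_nonneg (hφ i) hh.le
        have hl1 : l ≤ 1 := by rw [hl, div_le_one hh]; exact hi
        have hlh : l * h = φ i := by rw [hl]; field_simp
        have hchord := hconv.2 (Set.mem_Ici.2 (by linarith : (0:ℝ) ≤ h + ψ))
          (Set.mem_Ici.2 hψ.le) hl0 (by linarith : (0:ℝ) ≤ 1 - l) (by ring)
        simp only [smul_eq_mul] at hchord
        have harg : l * (h + ψ) + (1 - l) * ψ = φ i + ψ := by
          rw [← hlh]; ring
        rw [harg] at hchord
        -- hchord : θ (φ i + ψ) ≤ l * θ (h + ψ) + (1 - l) * θ ψ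
        have e3 : h * (l * θ (h + ψ) + (1 - l) * θ ψ)
            = φ i * θ (h + ψ) + (h - φ i) * θ ψ := by rw [← hlh]; ring
        have hchord' : h * θ (φ i + ψ) ≤ φ i * θ (h + ψ) + (h - φ i) * θ ψ := by
          have h4 := mul_le_mul_of_nonneg_left hchord hh.le
          rw [e3] at h4
          exact h4
        have hkh := key h le_rfl
        have hintA := mul_le_mul_of_nonneg_left hchord' hhψ.le
        have hintB := mul_le_mul_of_nonneg_left hkh (hφ i)
        linarith [hintA, hintB]
    have hsum2 : h * (h - ψ) * ∑ i, θ (φ i + ψ)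
        ≤ (h * (h - ψ) * α) * ∑ i, θ (max (φ i) h)
          + (ψ * (α * θ h - θ ψ) + (h - ψ) * (α * θ h - θ ψ)) * ∑ i, min (φ i) h
          - m * ((h - ψ) * (α * θ h - θ ψ) * h) := by
      calc h * (h - ψ) * ∑ i, θ (φ i + ψ)
          = ∑ i, h * (h - ψ) * θ (φ i + ψ) := by rw [Finset.mul_sum]
        _ ≤ ∑ i, ((h * (h - ψ) * α) * θ (max (φ i) h)
              + (ψ * (α * θ h - θ ψ) + (h - ψ) * (α * θ h - θ ψ)) * min (φ i) h
              - (h - ψ) * (α * θ h - θ ψ) * h) := by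
            refine Finset.sum_le_sum fun i _ => ?_
            linarith [perI i]
        _ = _ := by
            rw [Finset.sum_sub_distrib, Finset.sum_add_distrib, ← Finset.mul_sum,
              ← Finset.mul_sum, Finset.sum_const, Finset.card_univ, nsmul_eq_mul, ← hm]
    have hfinal : h * (h - ψ) * ∑ i, θ (φ i + ψ)
        ≤ h * (h - ψ) * (α * ∑ i, θ (max (φ i) h)) := by
      rw [hsum_min] at hsum2
      nlinarith [hsum2]
    exact le_of_mul_le_mul_left hfinal (by positivity)
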